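/- ∫_{−1/3}^{1} √3 · arccos(y) / (1 + 3y²)^{3/2} dy = π/4 + (1/2)·arcsin(1/3) + (1/2)·arccos(−1/3). -/

import Mathlib

open Real intervalIntegral Set

private lemma pos_aux (y : ℝ) : (0:ℝ) < 1 + 3 * y ^ 2 := by positivity

private lemma rpow_aux (y : ℝ) :
    (1 + 3 * y ^ 2 : ℝ) ^ ((3:ℝ)/2) = (1 + 3 * y ^ 2) * Real.sqrt (1 + 3 * y ^ 2) := by
  have h := pos_aux y
  rw [show (3:ℝ)/2 = 1 + 1/2 by norm_num, Real.rpow_add h, Real.rpow_one,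
    ← Real.sqrt_eq_rpow]

noncomputable def Faux (y : ℝ) : ℝ :=
  Real.sqrt 3 * y * Real.arccos y / Real.sqrt (1 + 3 * y ^ 2)
    - (1/2) * Real.arcsin ((1 - 3 * y ^ 2) / 2)

private lemma hderiv_aux {x : ℝ} (hx : x ∈ Set.Ioo (-(1:ℝ)/3) 1) :
    HasDerivAt Faux
      (Real.sqrt 3 * Real.arccos x / ((1 + 3 * x ^ 2) * Real.sqrt (1 + 3 * x ^ 2))) x := by
  obtain ⟨hxl, hxr⟩ := hx
  have hx1 : -1 < x := by linarith
  have hx2 : x < 1 := hxr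
  have hs : (0:ℝ) < Real.sqrt (1 - x ^ 2) := Real.sqrt_pos.2 (by nlinarith)
  have ht : (0:ℝ) < Real.sqrt (1 + 3 * x ^ 2) := Real.sqrt_pos.2 (pos_aux x)
  have hs2 : Real.sqrt (1 - x ^ 2) ^ 2 = 1 - x ^ 2 := Real.sq_sqrt (by nlinarith)
  have ht2 : Real.sqrt (1 + 3 * x ^ 2) ^ 2 = 1 + 3 * x ^ 2 := Real.sq_sqrt (pos_aux x).le
  -- derivative of numerator
  have hnum : HasDerivAt (fun y : ℝ => Real.sqrt 3 * y * Real.arccos y)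
      (Real.sqrt 3 * 1 * Real.arccos x + Real.sqrt 3 * x * (-(1 / Real.sqrt (1 - x ^ 2)))) x :=
    (((hasDerivAt_id x).const_mul (Real.sqrt 3)).mul
      (Real.hasDerivAt_arccos (by linarith) (ne_of_lt hx2)))
  -- derivative of denominator
  have hinner : HasDerivAt (fun y : ℝ => 1 + 3 * y ^ 2) (6 * x) x := by
    have h := ((hasDerivAt_pow 2 x).const_mul (3:ℝ)).const_add (1:ℝ)
    convert h using 1
    any_goals rfl
    ring
  have hden : HasDerivAt (fun y : ℝ => Real.sqrt (1 + 3 * y ^ 2))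
      (1 / (2 * Real.sqrt (1 + 3 * x ^ 2)) * (6 * x)) x :=
    (Real.hasDerivAt_sqrt (pos_aux x).ne').comp x hinner
  have h1 : HasDerivAt (fun y : ℝ => Real.sqrt 3 * y * Real.arccos y / Real.sqrt (1 + 3 * y ^ 2))
      (((Real.sqrt 3 * 1 * Real.arccos x + Real.sqrt 3 * x * (-(1 / Real.sqrt (1 - x ^ 2)))) *
          Real.sqrt (1 + 3 * x ^ 2) -
        Real.sqrt 3 * x * Real.arccos x * (1 / (2 * Real.sqrt (1 + 3 * x ^ 2)) * (6 * x))) /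
        Real.sqrt (1 + 3 * x ^ 2) ^ 2) x :=
    hnum.div hden ht.ne'
  -- arcsin part
  have hu : HasDerivAt (fun y : ℝ => (1 - 3 * y ^ 2) / 2) (-3 * x) x := by
    have h := (((hasDerivAt_pow 2 x).const_mul (3:ℝ)).const_sub (1:ℝ)).div_const (2:ℝ)
    convert h using 1
    any_goals rfl
    ring
  have hu1 : (1 - 3 * x ^ 2) / 2 ≠ -1 := by nlinarith
  have hu2 : (1 - 3 * x ^ 2) / 2 ≠ 1 := by nlinarith
  have h2 : HasDerivAt (fun y : ℝ => (1/2) * Real.arcsin ((1 - 3 * y ^ 2) / 2))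
      ((1/2) * (1 / Real.sqrt (1 - ((1 - 3 * x ^ 2) / 2) ^ 2) * (-3 * x))) x :=
    (((Real.hasDerivAt_arcsin hu1 hu2).comp x hu).const_mul (1/2))
  have key : Real.sqrt (1 - ((1 - 3 * x ^ 2) / 2) ^ 2)
      = Real.sqrt 3 * Real.sqrt (1 + 3 * x ^ 2) * Real.sqrt (1 - x ^ 2) / 2 := by
    rw [show (1:ℝ) - ((1 - 3 * x ^ 2) / 2) ^ 2
        = (Real.sqrt 3 * Real.sqrt (1 + 3 * x ^ 2) * Real.sqrt (1 - x ^ 2) / 2) ^ 2 by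
      rw [div_pow, div_pow, mul_pow, mul_pow, hs2, ht2, Real.sq_sqrt (by norm_num : (0:ℝ) ≤ 3)]
      ring]
    exact Real.sqrt_sq (by positivity)
  have := h1.sub h2
  convert this using 1
  any_goals rfl
  rw [key]
  set a := Real.sqrt 3 with ha
  set t := Real.sqrt (1 + 3 * x ^ 2) with hta
  set s := Real.sqrt (1 - x ^ 2) with hsa
  have h3 : a * a = 3 := Real.mul_self_sqrt (by norm_num)
  have hts : t * t = 1 + 3 * x ^ 2 := Real.mul_self_sqrt (pos_aux x).le
  have hss : s * s = 1 - x ^ 2 := Real.mul_self_sqrt (by nlinarith)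
  have ha0 : a ≠ 0 := by rw [ha]; positivity
  rw [← hts, pow_two]
  field_simp
  linear_combination (-(2:ℝ) * a ^ 2 * Real.arccos x * s) * hts
    + (2 * x * t ^ 2) * h3

theorem triple_bubble_integral_substituted :
    ∫ y in (-(1:ℝ)/3)..1, Real.sqrt 3 * Real.arccos y / (1 + 3 * y^2) ^ ((3:ℝ)/2)
      = π/4 + (1/2) * Real.arcsin (1/3) + (1/2) * Real.arccos (-(1/3)) := by
  have hrw : ∀ y : ℝ, Real.sqrt 3 * Real.arccos y / (1 + 3 * y^2) ^ ((3:ℝ)/2)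
      = Real.sqrt 3 * Real.arccos y / ((1 + 3 * y ^ 2) * Real.sqrt (1 + 3 * y ^ 2)) := by
    intro y; rw [← rpow_aux y]
  simp only [hrw]
  have hcont : Continuous (fun y : ℝ =>
      Real.sqrt 3 * Real.arccos y / ((1 + 3 * y ^ 2) * Real.sqrt (1 + 3 * y ^ 2))) := by
    apply Continuous.div
    · exact continuous_const.mul Real.continuous_arccos
    · exact (continuous_const.add (continuous_const.mul (continuous_pow 2))).mul
        (Real.continuous_sqrt.comp (continuous_const.add (continuous_const.mul (continuous_pow 2))))
    · intro y
      have := pos_aux y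
      have := Real.sqrt_pos.2 (pos_aux y)
      positivity
  have hFc : Continuous Faux := by
    apply Continuous.sub
    · apply Continuous.div
      · exact (continuous_const.mul continuous_id).mul Real.continuous_arccos
      · exact Real.continuous_sqrt.comp (continuous_const.add (continuous_const.mul (continuous_pow 2)))
      · intro y; exact (Real.sqrt_pos.2 (pos_aux y)).ne'
    · exact continuous_const.mul (Real.continuous_arcsin.comp
        ((continuous_const.sub (continuous_const.mul (continuous_pow 2))).div_const 2))
  rw [intervalIntegral.integral_eq_sub_of_hasDerivAt_of_le (by norm_num)
    hFc.continuousOn (fun x hx => hderiv_aux hx)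
    (hcont.intervalIntegrable _ _)]
  have hF1 : Faux 1 = π/4 := by
    simp only [Faux]
    norm_num
    ring
  have hF2 : Faux (-(1:ℝ)/3) = -(1/2) * Real.arccos (-(1/3)) - (1/2) * Real.arcsin (1/3) := by
    simp only [Faux]
    have h1 : (1:ℝ) + 3 * (-(1:ℝ)/3) ^ 2 = 4/3 := by norm_num
    have h2 : ((1:ℝ) - 3 * (-(1:ℝ)/3) ^ 2) / 2 = 1/3 := by norm_num
    rw [h1, h2]
    have h43 : Real.sqrt (4/3) = 2 / Real.sqrt 3 := by
      rw [show (4:ℝ)/3 = (2 / Real.sqrt 3)^2 by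
        rw [div_pow, Real.sq_sqrt (by norm_num : (0:ℝ) ≤ 3)]; norm_num]
      exact Real.sqrt_sq (by positivity)
    rw [h43, show (-(1:ℝ)/3) = -(1/3) by norm_num]
    have h3 : Real.sqrt 3 * Real.sqrt 3 = 3 := Real.mul_self_sqrt (by norm_num)
    have h3p : (0:ℝ) < Real.sqrt 3 := Real.sqrt_pos.2 (by norm_num)
    field_simp
    ring_nf
    nlinarith [h3, h3p, Real.arccos_nonneg (-(1/3):ℝ)]
  rw [hF1, hF2]
  ring
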